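/- Let γ ≥ 1, let n ≥ 1 be an integer, let λ > 0, and set x₀ := (λ/(nπ)²)^{1/(2γ)}; assume x₀ ≤ 1. Let v : [−1,1] → ℝ be twice continuously differentiable, even, with ∫_{−1}^1 v(x)² dx = 1 and −v″(x) + ((nπ)² |x|^{2γ} − λ) v(x) = 0 for all x ∈ (−1,1). Then |v′(x₀)| ≤ √(x₀) · λ. -/

import Mathlib

open MeasureTheory Set

/-- Bound on the derivative of the normalized even eigenfunction at the point
`x₀ = (λ/(nπ)²)^(1/(2γ))`: `|v'(x₀)| ≤ √x₀ · λ`. -/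
theorem eigenfunction_derivative_bound
    (γ : ℝ) (hγ : 1 ≤ γ) (n : ℕ) (hn : 1 ≤ n) (lam : ℝ) (hlam : 0 < lam)
    (x₀ : ℝ) (hx₀ : x₀ = (lam / ((n : ℝ) * Real.pi) ^ 2) ^ (1 / (2 * γ)))
    (hx₀1 : x₀ ≤ 1)
    (v v' v'' : ℝ → ℝ)
    (hv1 : ∀ x ∈ Set.Icc (-1 : ℝ) 1, HasDerivWithinAt v (v' x) (Set.Icc (-1 : ℝ) 1) x)
    (hv2 : ∀ x ∈ Set.Icc (-1 : ℝ) 1, HasDerivWithinAt v' (v'' x) (Set.Icc (-1 : ℝ) 1) x)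
    (hv3 : ContinuousOn v'' (Set.Icc (-1 : ℝ) 1))
    (heven : ∀ x ∈ Set.Icc (-1 : ℝ) 1, v (-x) = v x)
    (hnorm : ∫ x in Set.Ioo (-1 : ℝ) 1, (v x) ^ 2 = 1)
    (hode : ∀ x ∈ Set.Ioo (-1 : ℝ) 1,
      -v'' x + (((n : ℝ) * Real.pi) ^ 2 * |x| ^ (2 * γ) - lam) * v x = 0) :
    |v' x₀| ≤ Real.sqrt x₀ * lam := by
  have hγ2 : (0:ℝ) < 2 * γ := by linarith
  have hn1 : (1:ℝ) ≤ (n:ℝ) := by exact_mod_cast hn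
  have hπ : 0 < ((n:ℝ) * Real.pi) ^ 2 := by
    have := Real.pi_pos
    positivity
  have hbase : 0 < lam / ((n:ℝ) * Real.pi) ^ 2 := div_pos hlam hπ
  have hx₀pos : 0 < x₀ := hx₀ ▸ Real.rpow_pos_of_pos hbase _
  set s := Real.sqrt x₀ with hs
  have hspos : 0 < s := Real.sqrt_pos.mpr hx₀pos
  have hs2 : s ^ 2 = x₀ := Real.sq_sqrt hx₀pos.le
  -- x₀ ^ (2γ) = lam / (nπ)²
  have hx₀pow : x₀ ^ (2 * γ) = lam / ((n:ℝ) * Real.pi) ^ 2 := by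
    rw [hx₀, ← Real.rpow_mul hbase.le, one_div, inv_mul_cancel₀ (ne_of_gt hγ2), Real.rpow_one]
  -- coefficient bound
  have hcoef : ∀ x : ℝ, 0 < x → x ≤ x₀ →
      |((n:ℝ) * Real.pi) ^ 2 * |x| ^ (2 * γ) - lam| ≤ lam := by
    intro x hx1 hx2
    have hxabs : |x| = x := abs_of_pos hx1
    have h1 : |x| ^ (2 * γ) ≤ x₀ ^ (2 * γ) := by
      rw [hxabs]; exact Real.rpow_le_rpow hx1.le hx2 hγ2.le
    have h2 : ((n:ℝ) * Real.pi) ^ 2 * |x| ^ (2 * γ) ≤ lam := by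
      calc ((n:ℝ) * Real.pi) ^ 2 * |x| ^ (2 * γ)
          ≤ ((n:ℝ) * Real.pi) ^ 2 * x₀ ^ (2 * γ) := by
            exact mul_le_mul_of_nonneg_left h1 hπ.le
        _ = lam := by rw [hx₀pow]; field_simp
    have h3 : 0 ≤ ((n:ℝ) * Real.pi) ^ 2 * |x| ^ (2 * γ) := by positivity
    rw [abs_le]; constructor <;> linarith
  -- v' 0 = 0
  have h0mem : (0:ℝ) ∈ Icc (-1:ℝ) 1 := by norm_num
  have hIcc_nhds : Icc (-1:ℝ) 1 ∈ nhds (0:ℝ) := Icc_mem_nhds (by norm_num) (by norm_num)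
  have hd0 : HasDerivAt v (v' 0) 0 := (hv1 0 h0mem).hasDerivAt hIcc_nhds
  have hd0' : HasDerivAt v (v' 0) (-0) := by rwa [neg_zero]
  have hdneg : HasDerivAt (fun x => v (-x)) (-(v' 0)) 0 := by
    have := hd0'.comp (0:ℝ) (hasDerivAt_neg (0:ℝ))
    simpa [Function.comp_def] using this
  have heq : (fun x => v (-x)) =ᶠ[nhds (0:ℝ)] v := by
    filter_upwards [hIcc_nhds] with x hx using heven x hx
  have hdneg' : HasDerivAt v (-(v' 0)) 0 := hdneg.congr_of_eventuallyEq heq.symm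
  have hv'0 : v' 0 = 0 := by have := hd0.unique hdneg'; linarith
  -- FTC
  have hsub : Icc (0:ℝ) x₀ ⊆ Icc (-1:ℝ) 1 := Icc_subset_Icc (by norm_num) hx₀1
  have hcv' : ContinuousOn v' (Icc 0 x₀) := fun x hx =>
    ((hv2 x (hsub hx)).continuousWithinAt).mono hsub
  have hIoosub : Ioo (0:ℝ) x₀ ⊆ Ioo (-1:ℝ) 1 := Ioo_subset_Ioo (by norm_num) hx₀1
  have hderivIoo : ∀ x ∈ Ioo (0:ℝ) x₀, HasDerivAt v' (v'' x) x := by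
    intro x hx
    have hmem := hIoosub hx
    exact (hv2 x (Ioo_subset_Icc_self hmem)).hasDerivAt (Icc_mem_nhds hmem.1 hmem.2)
  have hint : IntervalIntegrable v'' volume 0 x₀ := by
    apply ContinuousOn.intervalIntegrable
    rw [uIcc_of_le hx₀pos.le]
    exact hv3.mono hsub
  have hFTC : ∫ x in (0:ℝ)..x₀, v'' x = v' x₀ - v' 0 :=
    intervalIntegral.integral_eq_sub_of_hasDeriv_right_of_le hx₀pos.le hcv'
      (fun x hx => (hderivIoo x hx).hasDerivWithinAt) hint
  have hFTC' : v' x₀ = ∫ x in (0:ℝ)..x₀, v'' x := by rw [hFTC, hv'0]; ring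
  -- auxiliary function
  set g : ℝ → ℝ := fun x => lam / (2 * s) + lam * s / 2 * v x ^ 2 with hg
  have hvcont : ContinuousOn v (Icc (-1:ℝ) 1) := fun x hx => (hv1 x hx).continuousWithinAt
  have hv2cont : ContinuousOn (fun x => v x ^ 2) (Icc (-1:ℝ) 1) := hvcont.pow 2
  have hv2int : IntervalIntegrable (fun x => v x ^ 2) volume 0 x₀ := by
    apply ContinuousOn.intervalIntegrable
    rw [uIcc_of_le hx₀pos.le]
    exact hv2cont.mono hsub
  have hgint : IntervalIntegrable g volume 0 x₀ := by
    simpa [hg] using (intervalIntegrable_const (c := lam / (2 * s))).add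
      (hv2int.const_mul (lam * s / 2))
  -- pointwise bound a.e.
  have hbound : ∀ᵐ t ∂(volume.restrict (Set.uIoc (0:ℝ) x₀)), ‖v'' t‖ ≤ g t := by
    rw [uIoc_of_le hx₀pos.le, ae_restrict_iff' measurableSet_Ioc]
    have hnull : volume ({x₀} : Set ℝ) = 0 := measure_singleton _
    filter_upwards [compl_mem_ae_iff.mpr hnull] with x hxne hx
    have hxne' : x ≠ x₀ := by simpa using hxne
    have hx' : x ∈ Ioo (0:ℝ) x₀ := ⟨hx.1, lt_of_le_of_ne hx.2 hxne'⟩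
    have hode' := hode x (hIoosub hx')
    have hvx : v'' x = (((n:ℝ) * Real.pi) ^ 2 * |x| ^ (2 * γ) - lam) * v x := by linarith
    have hcoef' := hcoef x hx'.1 hx'.2.le
    have key1 : ‖v'' x‖ ≤ lam * |v x| := by
      rw [hvx, Real.norm_eq_abs, abs_mul]
      exact mul_le_mul_of_nonneg_right hcoef' (abs_nonneg _)
    have h1 : 2 * s * |v x| ≤ 1 + s ^ 2 * v x ^ 2 := by
      nlinarith [sq_nonneg (1 - s * |v x|), sq_abs (v x)]
    have h2 : lam * (2 * s * |v x|) ≤ lam * (1 + s ^ 2 * v x ^ 2) :=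
      mul_le_mul_of_nonneg_left h1 hlam.le
    have h3 : g x = lam * (1 + s ^ 2 * v x ^ 2) / (2 * s) := by
      simp only [hg]; field_simp
    calc ‖v'' x‖ ≤ lam * |v x| := key1
      _ ≤ g x := by rw [h3, le_div_iff₀ (by positivity)]; nlinarith [h2]
  have hmain : |∫ x in (0:ℝ)..x₀, v'' x| ≤ |∫ x in (0:ℝ)..x₀, g x| := by
    simpa [Real.norm_eq_abs] using
      intervalIntegral.norm_integral_le_abs_of_norm_le hbound hgint
  -- compute ∫ g
  have hgcalc : ∫ x in (0:ℝ)..x₀, g x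
      = lam / (2 * s) * x₀ + lam * s / 2 * ∫ x in (0:ℝ)..x₀, v x ^ 2 := by
    rw [hg]
    rw [intervalIntegral.integral_add (intervalIntegrable_const)
      (hv2int.const_mul (lam * s / 2)), intervalIntegral.integral_const_mul,
      intervalIntegral.integral_const]
    simp [smul_eq_mul, mul_comm]
  -- ∫ v² ≤ 1
  have hS : ∫ x in (0:ℝ)..x₀, v x ^ 2 ≤ 1 := by
    rw [intervalIntegral.integral_of_le hx₀pos.le, ← hnorm,
      ← MeasureTheory.integral_Ioc_eq_integral_Ioo]
    apply setIntegral_mono_set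
    · exact (hv2cont.integrableOn_Icc).mono_set Ioc_subset_Icc_self
    · filter_upwards with x using sq_nonneg _
    · exact HasSubset.Subset.eventuallyLE (Ioc_subset_Ioc (by norm_num) hx₀1)
  have hSnn : 0 ≤ ∫ x in (0:ℝ)..x₀, v x ^ 2 := by
    rw [intervalIntegral.integral_of_le hx₀pos.le]
    exact setIntegral_nonneg measurableSet_Ioc (fun x _ => sq_nonneg _)
  -- finish
  have hgval : |∫ x in (0:ℝ)..x₀, g x| ≤ s * lam := by
    rw [hgcalc, abs_of_nonneg (by positivity)]
    have hdiv : lam / (2 * s) * x₀ = lam * s / 2 := by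
      rw [← hs2]; field_simp
    rw [hdiv]
    have h4 : lam * s / 2 * ∫ x in (0:ℝ)..x₀, v x ^ 2 ≤ lam * s / 2 * 1 :=
      mul_le_mul_of_nonneg_left hS (by positivity)
    have h5 : s * lam = lam * s / 2 + lam * s / 2 * 1 := by ring
    rw [h5]
    linarith [h4]
  calc |v' x₀| = |∫ x in (0:ℝ)..x₀, v'' x| := by rw [hFTC']
    _ ≤ |∫ x in (0:ℝ)..x₀, g x| := hmain
    _ ≤ s * lam := hgval
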